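/- Let τ : 2^{A*} → Q be a nice rating map and C a Boolean algebra of languages over A. Then the element I = τ(L), where L is any C-optimal ε-approximation for τ, equals the sum over all q ∈ Q such that {ε} is not C-separable from τ⁻¹(q) ∩ A* (viewing τ restricted to singletons as a map A* → Q). -/

import Mathlib

open Classical

open Computability

instance {α : Type*} : Union (Language α) := ⟨Set.union⟩
instance {α : Type*} : Inter (Language α) := ⟨Set.inter⟩
instance {α : Type*} : HasSubset (Language α) := ⟨fun l m => ∀ x ∈ l, x ∈ m⟩
instance {α : Type*} : EmptyCollection (Language α) := ⟨fun _ => False⟩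

/-- For a nice rating map `τ` and a Boolean algebra `C`, the value `τ(L)` of any
`C`-optimal `ε`-approximation `L` equals the sum of all `q ∈ Q` such that `{ε}`
is not `C`-separable from `τ_*⁻¹(q)`. -/
theorem optimal_eps_approximation_eq_sum {A Q : Type*} [AddCommMonoid Q] [Fintype Q]
    (hQidem : ∀ q : Q, q + q = q)
    (τ : Language A → Q) (hτ0 : τ (∅ : Language A) = 0)
    (hτadd : ∀ K L : Language A, τ (K ∪ L) = τ K + τ L)
    (hnice : ∀ K : Language A, (∃ w, w ∈ K) →
      ∃ l : List (List A), (∀ w ∈ l, w ∈ K) ∧ τ K = (l.map fun w => τ {w}).sum)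
    (C : Set (Language A)) (hUniv : (Set.univ : Language A) ∈ C)
    (hCompl : ∀ L ∈ C, Lᶜ ∈ C)
    (hUnion : ∀ L ∈ C, ∀ L' ∈ C, L ∪ L' ∈ C)
    (hInter : ∀ L ∈ C, ∀ L' ∈ C, L ∩ L' ∈ C)
    (L : Language A) (hLC : L ∈ C) (hLe : [] ∈ L)
    (hopt : ∀ L' ∈ C, [] ∈ L' → τ L + τ L' = τ L') :
    τ L = ∑ q ∈ Finset.univ.filter (fun q : Q =>
        ¬ ∃ K ∈ C, [] ∈ K ∧ K ∩ ({w | τ {w} = q} : Language A) = (∅ : Language A)), q := by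
  classical
  set S := Finset.univ.filter (fun q : Q =>
      ¬ ∃ K ∈ C, [] ∈ K ∧ K ∩ ({w | τ {w} = q} : Language A) = (∅ : Language A)) with hS
  -- monotonicity of τ
  have mono : ∀ K M : Language A, (∀ x ∈ K, x ∈ M) → τ K + τ M = τ M := by
    intro K M hKM
    have hu : K ∪ M = M := Set.ext fun w =>
      ⟨fun h => h.elim (fun hk => hKM w hk) id, fun h => Or.inr h⟩
    have h1 := hτadd K M
    rw [hu] at h1
    exact h1.symm
  -- a list sum of elements each ≤ x is ≤ x
  have sum_le : ∀ (l : List Q) (x : Q), (∀ q ∈ l, q + x = x) → l.sum + x = x := by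
    intro l
    induction l with
    | nil => intro x _; simp
    | cons a t ih =>
        intro x h
        rw [List.sum_cons, add_assoc, ih x (fun q hq => h q (List.mem_cons_of_mem a hq)),
          h a List.mem_cons_self]
  -- a finset sum of elements each ≤ x is ≤ x
  have finsum_le : ∀ (s : Finset Q) (x : Q), (∀ q ∈ s, q + x = x) → (∑ q ∈ s, q) + x = x := by
    intro s
    induction s using Finset.cons_induction with
    | empty => intro x _; simp
    | cons a s ha ih =>
        intro x h
        rw [Finset.sum_cons, add_assoc, ih x (fun q hq => h q (Finset.mem_cons_of_mem hq)),
          h a (Finset.mem_cons_self a s)]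
  -- each member of S is ≤ the sum over S
  have mem_le_sum : ∀ q ∈ S, q + (∑ r ∈ S, r) = ∑ r ∈ S, r := by
    intro q hq
    rw [← Finset.add_sum_erase S (fun r => r) hq, ← add_assoc, hQidem]
  -- Step 1 : sum over S ≤ τ L
  have hstep1 : (∑ q ∈ S, q) + τ L = τ L := by
    apply finsum_le
    intro q hq
    have hq' := (Finset.mem_filter.mp hq).2
    have hw : ∃ w, w ∈ L ∧ τ {w} = q := by
      by_contra hno
      push_neg at hno
      exact hq' ⟨L, hLC, hLe, Set.ext fun w =>
        ⟨fun hw => absurd hw.2 (hno w hw.1), False.elim⟩⟩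
    obtain ⟨w, hwL, hwq⟩ := hw
    rw [← hwq]
    exact mono {w} L (fun x hx => by have hx : x = w := hx; exact hx ▸ hwL)
  -- build a language in C containing ε all of whose words have values in S
  have sep : ∀ s : Finset Q, ∃ K : Language A, K ∈ C ∧ [] ∈ K ∧
      ∀ q ∈ s, q ∉ S → ∀ w ∈ K, τ {w} ≠ q := by
    intro s
    induction s using Finset.induction_on with
    | empty =>
        exact ⟨Set.univ, hUniv, trivial, fun q hq => absurd hq (Finset.notMem_empty q)⟩
    | @insert a s ha ih =>
        obtain ⟨K', hK'C, hK'e, hK'⟩ := ih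
        by_cases hsep : a ∈ S
        · refine ⟨K', hK'C, hK'e, fun q hq hqS w hw => ?_⟩
          rcases Finset.mem_insert.mp hq with rfl | hq'
          · exact absurd hsep hqS
          · exact hK' q hq' hqS w hw
        · have ha' : ∃ K ∈ C, [] ∈ K ∧ K ∩ ({w | τ {w} = a} : Language A) = (∅ : Language A) := by
            by_contra h
            exact hsep (Finset.mem_filter.mpr ⟨Finset.mem_univ a, h⟩)
          obtain ⟨Ka, hKaC, hKae, hKa⟩ := ha'
          refine ⟨K' ∩ Ka, hInter _ hK'C _ hKaC, ⟨hK'e, hKae⟩, ?_⟩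
          intro q hq hqS w hw hτ
          have hw' : w ∈ K' ∧ w ∈ Ka := hw
          rcases Finset.mem_insert.mp hq with rfl | hq'
          · have hmem : w ∈ Ka ∩ ({w | τ {w} = q} : Language A) := ⟨hw'.2, hτ⟩
            rw [hKa] at hmem
            exact hmem
          · exact hK' q hq' hqS w hw'.1 hτ
  obtain ⟨K, hKC, hKe, hK⟩ := sep Finset.univ
  have hLK : τ L + τ K = τ K := hopt K hKC hKe
  obtain ⟨l, hl, hKsum⟩ := hnice K ⟨[], hKe⟩
  have hmemS : ∀ w ∈ l, τ {w} ∈ S := by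
    intro w hw
    by_contra hns
    exact hK (τ {w}) (Finset.mem_univ _) hns w (hl w hw) rfl
  -- Step 2 : τ L ≤ sum over S
  have hstep2 : τ L + (∑ q ∈ S, q) = ∑ q ∈ S, q := by
    have hK2 : τ K + (∑ q ∈ S, q) = ∑ q ∈ S, q := by
      rw [hKsum]
      apply sum_le
      intro q hq
      obtain ⟨w, hwl, rfl⟩ := List.mem_map.mp hq
      exact mem_le_sum _ (hmemS w hwl)
    calc τ L + (∑ q ∈ S, q) = τ L + (τ K + ∑ q ∈ S, q) := by rw [hK2]
      _ = (τ L + τ K) + ∑ q ∈ S, q := (add_assoc _ _ _).symm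
      _ = τ K + ∑ q ∈ S, q := by rw [hLK]
      _ = ∑ q ∈ S, q := hK2
  calc τ L = (∑ q ∈ S, q) + τ L := hstep1.symm
    _ = τ L + ∑ q ∈ S, q := add_comm _ _
    _ = ∑ q ∈ S, q := hstep2
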